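/- Fix a real number λ, a nonnegative integer r, and a real number x. In the ring ℝ[[t]] of formal power series over ℝ, the power series 1 − x·(e_λ(t) − 1) has constant term 1, hence is invertible, and (1 − x·(e_λ(t) − 1))⁻¹ · e_λ^r(t) = Σ_{n≥0} ( Σ_{k=0}^{n} x^k · k! · {n+r, k+r}_{r,λ} ) t^n/n!; that is, the degenerate two variable Fubini polynomial evaluated at (x, r) satisfies F_{n,λ}(x|r) = Σ_{k=0}^{n} x^k k! {n+r, k+r}_{r,λ}. -/

import Mathlib

open Finset PowerSeries

/-- The degenerate falling factorial `(y)_{n,λ} = y(y-λ)(y-2λ)⋯(y-(n-1)λ)`. -/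
noncomputable def degFall (lam y : ℝ) (n : ℕ) : ℝ := ∏ i ∈ Finset.range n, (y - i * lam)

/-- The degenerate exponential `e_λ^y(t) = ∑_{n≥0} (y)_{n,λ} tⁿ/n!` as a formal power series. -/
noncomputable def degExp (lam y : ℝ) : PowerSeries ℝ :=
  PowerSeries.mk fun n => degFall lam y n / (Nat.factorial n : ℝ)

lemma degFall_succ (lam y : ℝ) (n : ℕ) :
    degFall lam y (n+1) = degFall lam y n * (y - n * lam) := by
  simp [degFall, Finset.prod_range_succ]

lemma degFall_zero_left (lam : ℝ) (n : ℕ) :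
    degFall lam 0 n = if n = 0 then 1 else 0 := by
  cases n with
  | zero => simp [degFall]
  | succ n =>
    simp only [Nat.succ_ne_zero, if_false, degFall]
    apply Finset.prod_eq_zero (Finset.mem_range.mpr (Nat.succ_pos n))
    simp

lemma degFall_add (lam a b : ℝ) (n : ℕ) : degFall lam (a + b) n
    = ∑ j ∈ range (n+1), (n.choose j : ℝ) * degFall lam a j * degFall lam b (n - j) := by
  induction n with
  | zero => simp [degFall]
  | succ n ih =>
    rw [degFall_succ, ih, Finset.sum_mul]
    have key : ∀ j ∈ range (n+1),
        (n.choose j : ℝ) * degFall lam a j * degFall lam b (n - j) * (a + b - n * lam)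
        = (n.choose j : ℝ) * degFall lam a (j+1) * degFall lam b (n - j)
          + (n.choose j : ℝ) * degFall lam a j * degFall lam b (n - j + 1) := by
      intro j hj
      have hj' : j ≤ n := Nat.lt_succ_iff.mp (mem_range.mp hj)
      rw [degFall_succ, degFall_succ, Nat.cast_sub hj']
      ring
    rw [Finset.sum_congr rfl key, Finset.sum_add_distrib]
    rw [Finset.sum_range_succ' (fun j => ((n+1).choose j : ℝ) * degFall lam a j * degFall lam b (n + 1 - j)) (n+1)]
    simp only [Nat.succ_sub_succ, Nat.choose_succ_succ (n := n), Nat.cast_add, Nat.choose_zero_right,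
      Nat.cast_one, Nat.sub_zero, degFall, Finset.prod_range_zero]
    simp only [add_mul, Finset.sum_add_distrib, one_mul]
    rw [add_assoc]
    congr 1
    rw [Finset.sum_range_succ' (fun x => (n.choose x : ℝ) * (∏ i ∈ Finset.range x, (a - i * lam)) * ∏ i ∈ Finset.range (n - x + 1), (b - i * lam)) n]
    rw [Finset.sum_range_succ (fun x => (n.choose (x+1) : ℝ) * (∏ i ∈ Finset.range (x+1), (a - i * lam)) * ∏ i ∈ Finset.range (n - x), (b - i * lam)) n]
    rw [Nat.choose_succ_self]
    simp only [Nat.cast_zero, zero_mul, add_zero, Nat.choose_zero_right, Nat.cast_one, one_mul,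
      Nat.sub_zero, Finset.prod_range_zero, mul_one]
    congr 1
    apply Finset.sum_congr rfl
    intro x hx
    have h : n - (x+1) + 1 = n - x := by
      have := Finset.mem_range.mp hx; omega
    rw [h]

lemma degExp_mul (lam a b : ℝ) : degExp lam a * degExp lam b = degExp lam (a + b) := by
  ext n
  rw [PowerSeries.coeff_mul, Finset.Nat.sum_antidiagonal_eq_sum_range_succ_mk]
  simp only [degExp, coeff_mk]
  rw [degFall_add, Finset.sum_div]
  apply Finset.sum_congr rfl
  intro j hj
  have hj' : j ≤ n := Nat.lt_succ_iff.mp (mem_range.mp hj)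
  rw [Nat.cast_choose ℝ hj']
  have h1 : (Nat.factorial j : ℝ) ≠ 0 := Nat.cast_ne_zero.mpr (Nat.factorial_ne_zero _)
  have h2 : (Nat.factorial (n - j) : ℝ) ≠ 0 := Nat.cast_ne_zero.mpr (Nat.factorial_ne_zero _)
  have h3 : (Nat.factorial n : ℝ) ≠ 0 := Nat.cast_ne_zero.mpr (Nat.factorial_ne_zero _)
  field_simp

lemma degExp_zero (lam : ℝ) : degExp lam 0 = 1 := by
  ext n
  simp only [degExp, coeff_mk, degFall_zero_left, PowerSeries.coeff_one]
  split_ifs with h <;> simp [h]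

lemma degExp_pow (lam : ℝ) (m : ℕ) : degExp lam 1 ^ m = degExp lam (m : ℝ) := by
  induction m with
  | zero => simpa using (degExp_zero lam).symm
  | succ m ih =>
    rw [pow_succ, ih, degExp_mul]
    norm_num

lemma degFall_one_shift (y : ℝ) : ∀ i : ℕ,
    degFall 1 (y + 1) (i+1) = degFall 1 y (i+1) + (i+1 : ℝ) * degFall 1 y i := by
  intro i
  induction i with
  | zero => simp [degFall]
  | succ i ih =>
    rw [degFall_succ 1 (y+1) (i+1), ih, degFall_succ 1 y (i+1), degFall_succ 1 y i]
    push_cast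
    ring

lemma ortho : ∀ k i : ℕ,
    ∑ j ∈ range (k+1), (-1 : ℝ)^(k-j) * (k.choose j : ℝ) * degFall 1 (j : ℝ) i
      = if i = k then (Nat.factorial k : ℝ) else 0 := by
  intro k
  induction k with
  | zero =>
    intro i
    simp [degFall_zero_left]
  | succ k ih =>
    intro i
    rw [Finset.sum_range_succ' (fun j => (-1 : ℝ)^(k+1-j) * ((k+1).choose j : ℝ) * degFall 1 (j:ℝ) i) (k+1)]
    simp only [Nat.succ_sub_succ, Nat.choose_succ_succ (n := k), Nat.cast_add, Nat.choose_zero_right,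
      Nat.cast_one, Nat.sub_zero, Nat.cast_zero, Nat.succ_eq_add_one]
    have hsplit : ∀ j ∈ range (k+1),
        (-1:ℝ)^(k-j) * ((k.choose j : ℝ) + (k.choose (j+1) : ℝ)) * degFall 1 ((j:ℝ)+1) i
        = (-1:ℝ)^(k-j) * (k.choose j : ℝ) * degFall 1 ((j:ℝ)+1) i
          + (-1:ℝ)^(k-j) * (k.choose (j+1) : ℝ) * degFall 1 ((j:ℝ)+1) i := by
      intro j hj; ring
    rw [Finset.sum_congr rfl hsplit, Finset.sum_add_distrib]
    have hB : (∑ j ∈ range (k+1), (-1:ℝ)^(k-j) * (k.choose (j+1) : ℝ) * degFall 1 ((j:ℝ)+1) i)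
        + (-1:ℝ)^(k+1) * 1 * degFall 1 0 i
        = - ∑ j ∈ range (k+1), (-1 : ℝ)^(k-j) * (k.choose j : ℝ) * degFall 1 (j : ℝ) i := by
      rw [Finset.sum_range_succ (fun j => (-1:ℝ)^(k-j) * (k.choose (j+1) : ℝ) * degFall 1 ((j:ℝ)+1) i) k]
      rw [Nat.choose_succ_self]
      rw [← Finset.sum_neg_distrib]
      rw [Finset.sum_range_succ' (fun j => -((-1 : ℝ)^(k-j) * (k.choose j : ℝ) * degFall 1 (j : ℝ) i)) k]
      simp only [Nat.cast_zero, Nat.choose_zero_right, Nat.cast_one, mul_zero, zero_mul, add_zero,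
        Nat.sub_zero, Nat.cast_succ]
      congr 1
      · apply Finset.sum_congr rfl
        intro j hj
        have hj' : j < k := Finset.mem_range.mp hj
        have hs : k - (j+1) + 1 = k - j := by omega
        rw [← hs, pow_succ]
        ring
      · rw [pow_succ]
        ring
    rw [add_assoc, hB]
    cases i with
    | zero =>
      have hA : (∑ j ∈ range (k+1), (-1:ℝ)^(k-j) * (k.choose j : ℝ) * degFall 1 ((j:ℝ)+1) 0)
          = ∑ j ∈ range (k+1), (-1 : ℝ)^(k-j) * (k.choose j : ℝ) * degFall 1 (j : ℝ) 0 := by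
        apply Finset.sum_congr rfl
        intro j hj
        simp [degFall]
      rw [hA]
      simp
    | succ i =>
      have hA : (∑ j ∈ range (k+1), (-1:ℝ)^(k-j) * (k.choose j : ℝ) * degFall 1 ((j:ℝ)+1) (i+1))
          = (∑ j ∈ range (k+1), (-1:ℝ)^(k-j) * (k.choose j : ℝ) * degFall 1 (j:ℝ) (i+1))
            + ((i:ℝ)+1) * ∑ j ∈ range (k+1), (-1:ℝ)^(k-j) * (k.choose j : ℝ) * degFall 1 (j:ℝ) i := by
        rw [Finset.mul_sum, ← Finset.sum_add_distrib]
        apply Finset.sum_congr rfl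
        intro j hj
        rw [degFall_one_shift (j : ℝ) i]
        ring
      rw [hA, ih, ih]
      rcases eq_or_ne i k with h | h
      · subst h
        rw [if_neg (by omega : ¬ i + 1 = i), if_pos rfl, if_pos rfl]
        push_cast [Nat.factorial_succ]; ring
      · rw [if_neg h, if_neg (by omega : ¬ i + 1 = k + 1)]
        by_cases h2 : i + 1 = k
        · rw [if_pos h2]; ring
        · rw [if_neg h2]; ring

/-- In `ℝ⟦t⟧`, the series `1 − x(e_λ(t) − 1)` has constant term `1` (hence is a unit), and
`(1 − x(e_λ(t) − 1))⁻¹ e_λ^r(t) = ∑_{n≥0} (∑_{k=0}^{n} x^k k! {n+r,k+r}_{r,λ}) tⁿ/n!`;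
i.e. the degenerate two variable Fubini polynomials satisfy
`F_{n,λ}(x|r) = ∑_{k=0}^{n} x^k k! {n+r,k+r}_{r,λ}`. -/
theorem degenerate_fubini_generating (lam : ℝ) (r : ℕ) (x : ℝ) (S2 : ℕ → ℕ → ℝ)
    (hS2 : ∀ (n : ℕ) (y : ℝ),
      degFall lam (y + r) n = ∑ k ∈ range (n + 1), S2 n k * degFall 1 y k) :
    constantCoeff (1 - PowerSeries.C x * (degExp lam 1 - 1)) = 1 ∧
    (1 - PowerSeries.C x * (degExp lam 1 - 1))⁻¹ * degExp lam r
      = PowerSeries.mk fun n =>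
          (∑ k ∈ range (n + 1), x ^ k * (Nat.factorial k : ℝ) * S2 n k) /
            (Nat.factorial n : ℝ) := by
  have hconstE : constantCoeff (degExp lam 1) = 1 := by
    simp [degExp, degFall]
  have hU : constantCoeff (1 - PowerSeries.C x * (degExp lam 1 - 1)) = 1 := by
    simp [hconstE]
  refine ⟨hU, ?_⟩
  set E := degExp lam 1 with hE
  set Er := degExp lam (r : ℝ) with hEr
  set c : ℕ → ℕ → ℝ := fun n k => coeff n ((E - 1)^k * Er) with hc
  have czero : ∀ n k : ℕ, n < k → c n k = 0 := by
    intro n k hnk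
    have hXdvd : (X : ℝ⟦X⟧) ∣ (E - 1) := by
      rw [PowerSeries.X_dvd_iff]
      simp [hconstE]
    have h2 : (X : ℝ⟦X⟧)^k ∣ (E - 1)^k * Er :=
      dvd_mul_of_dvd_left (pow_dvd_pow_of_dvd hXdvd k) _
    exact PowerSeries.X_pow_dvd_iff.mp h2 n hnk
  have ckey : ∀ n k : ℕ, k ≤ n →
      c n k = (Nat.factorial k : ℝ) * S2 n k / (Nat.factorial n : ℝ) := by
    intro n k hkn
    have hpow : (E - 1)^k * Er
        = ∑ j ∈ range (k+1),
            PowerSeries.C ((-1:ℝ)^(k-j) * (k.choose j : ℝ)) * degExp lam ((j + r : ℕ) : ℝ) := by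
      rw [sub_eq_add_neg, add_pow, Finset.sum_mul]
      apply Finset.sum_congr rfl
      intro j hj
      have h1 : E^j * E^r = degExp lam ((j + r : ℕ) : ℝ) := by
        rw [← pow_add, hE, degExp_pow]
      calc E^j * (-1:ℝ⟦X⟧)^(k-j) * ((k.choose j : ℕ) : ℝ⟦X⟧) * Er
          = ((-1:ℝ⟦X⟧)^(k-j) * ((k.choose j : ℕ) : ℝ⟦X⟧)) * (E^j * E^r) := by
            rw [hEr, ← degExp_pow lam r]; ring
        _ = PowerSeries.C ((-1:ℝ)^(k-j) * (k.choose j : ℝ)) * degExp lam ((j + r : ℕ) : ℝ) := by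
            rw [h1, map_mul, map_pow, map_neg, map_one, map_natCast]
    have hterm : ∀ j ∈ range (k+1),
        (coeff n) (PowerSeries.C ((-1:ℝ)^(k-j) * (k.choose j:ℝ)) * degExp lam ((j + r : ℕ) : ℝ))
        = ∑ i ∈ range (n+1),
            ((-1:ℝ)^(k-j) * (k.choose j:ℝ)) * (S2 n i * degFall 1 (j:ℝ) i) / (Nat.factorial n : ℝ) := by
      intro j hj
      rw [PowerSeries.coeff_C_mul]
      simp only [degExp, coeff_mk]
      have hcast : ((j + r : ℕ) : ℝ) = (j : ℝ) + (r : ℝ) := by push_cast; ring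
      rw [hcast, hS2 n (j:ℝ), Finset.sum_div, Finset.mul_sum]
      apply Finset.sum_congr rfl
      intro i hi
      ring
    have hcn : c n k = ∑ i ∈ range (n+1),
        (S2 n i / (Nat.factorial n : ℝ)) * (if i = k then (Nat.factorial k : ℝ) else 0) := by
      rw [hc]
      simp only
      rw [hpow, map_sum, Finset.sum_congr rfl hterm, Finset.sum_comm]
      apply Finset.sum_congr rfl
      intro i hi
      rw [← ortho k i, Finset.mul_sum]
      apply Finset.sum_congr rfl
      intro j hj
      ring
    rw [hcn]
    simp only [mul_ite, mul_zero]
    rw [Finset.sum_ite_eq' (range (n+1)) k (fun i => S2 n i / (Nat.factorial n : ℝ) * (Nat.factorial k : ℝ))]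
    rw [if_pos (mem_range.mpr (Nat.lt_succ_of_le hkn))]
    ring
  set B : ℝ⟦X⟧ := PowerSeries.mk (fun n =>
      (∑ k ∈ range (n + 1), x ^ k * (Nat.factorial k : ℝ) * S2 n k) /
        (Nat.factorial n : ℝ)) with hB
  have hcoeffB : ∀ m, coeff m B = ∑ k ∈ range (m+1), x^k * c m k := by
    intro m
    rw [hB, coeff_mk, Finset.sum_div]
    apply Finset.sum_congr rfl
    intro k hk
    rw [ckey m k (Nat.lt_succ_iff.mp (mem_range.mp hk))]
    ring
  have hEB : ∀ n, coeff n ((E - 1) * B) = ∑ k ∈ range (n+1), x^k * c n (k+1) := by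
    intro n
    rw [PowerSeries.coeff_mul]
    have h1 : ∀ p ∈ antidiagonal n,
        coeff p.1 (E-1) * coeff p.2 B
        = ∑ k ∈ range (n+1), coeff p.1 (E-1) * (x^k * c p.2 k) := by
      intro p hp
      have hp2 : p.2 ≤ n := by
        have := Finset.HasAntidiagonal.mem_antidiagonal.mp hp; omega
      rw [hcoeffB, Finset.mul_sum]
      apply Finset.sum_subset
      · intro k hk
        rw [mem_range] at hk ⊢; omega
      · intro k hk hk2
        rw [mem_range] at hk hk2
        rw [czero p.2 k (by omega)]
        ring
    rw [Finset.sum_congr rfl h1, Finset.sum_comm]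
    apply Finset.sum_congr rfl
    intro k hk
    have h2 : ∑ p ∈ antidiagonal n, coeff p.1 (E-1) * (x^k * c p.2 k)
        = x^k * ∑ p ∈ antidiagonal n, coeff p.1 (E-1) * c p.2 k := by
      rw [Finset.mul_sum]; apply Finset.sum_congr rfl; intro p hp; ring
    rw [h2]
    congr 1
    have h3 : (E-1)^(k+1) * Er = (E-1) * ((E-1)^k * Er) := by ring
    rw [hc]
    simp only
    rw [h3, PowerSeries.coeff_mul]
  have hUB : (1 - PowerSeries.C x * (E - 1)) * B = Er := by
    ext n
    rw [sub_mul, one_mul, mul_assoc, map_sub, PowerSeries.coeff_C_mul, hEB, hcoeffB]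
    rw [Finset.mul_sum]
    have h4 : ∀ k ∈ range (n+1), x * (x^k * c n (k+1)) = x^(k+1) * c n (k+1) := by
      intro k hk; ring
    rw [Finset.sum_congr rfl h4, ← Finset.sum_sub_distrib]
    rw [Finset.sum_range_sub' (fun k => x^k * c n k) (n+1)]
    rw [czero n (n+1) (Nat.lt_succ_self n), mul_zero, sub_zero, pow_zero, one_mul]
    rw [hc]
    simp only [pow_zero, one_mul]
  have hUne : constantCoeff (1 - PowerSeries.C x * (E - 1)) ≠ 0 := by
    rw [hU]; exact one_ne_zero
  calc (1 - PowerSeries.C x * (E - 1))⁻¹ * Er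
      = (1 - PowerSeries.C x * (E - 1))⁻¹ * ((1 - PowerSeries.C x * (E - 1)) * B) := by
        rw [hUB]
    _ = B := by rw [← mul_assoc, PowerSeries.inv_mul_cancel _ hUne, one_mul]
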